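/- Let z satisfy z^3 = p·z + q with 3z^2 - p ≠ 0. Then ∂_q of the expression (3qz + pz^2)/4 equals z, i.e., the element (3qz + pz^2)/4 is a q-primitive of z. Explicitly: if z : ℂ → ℂ is differentiable with z(q)^3 = p·z(q) + q for fixed p and 3z(q)^2 - p ≠ 0, then d/dq [ (3q·z(q) + p·z(q)^2)/4 ] = z(q). -/

import Mathlib

theorem stmt_9 (p : ℂ) (U : Set ℂ) (hU : IsOpen U) (z : ℂ → ℂ)
    (hz : ∀ q ∈ U, DifferentiableAt ℂ z q)
    (hrel : ∀ q ∈ U, z q ^ 3 = p * z q + q)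
    (hne : ∀ q ∈ U, 3 * z q ^ 2 - p ≠ 0) :
    ∀ q ∈ U, deriv (fun s : ℂ => (3 * s * z s + p * z s ^ 2) / 4) q = z q := by
  intro q hq
  have hdz := (hz q hq).hasDerivAt
  set w := z q with hw
  set d := deriv z q with hd
  have hev : (fun s => z s ^ 3 - p * z s) =ᶠ[nhds q] (fun s : ℂ => s) := by
    filter_upwards [hU.mem_nhds hq] with s hs
    linear_combination hrel s hs
  have h1 : HasDerivAt (fun s => z s ^ 3 - p * z s) (3 * w ^ 2 * d - p * d) q := by
    have := ((hdz.pow 3).sub (hdz.const_mul p))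
    norm_num at this
    exact this
  have key : 3 * w ^ 2 * d - p * d = 1 := by
    rw [← h1.deriv, hev.deriv_eq]; simp
  have hmain : HasDerivAt (fun s : ℂ => (3 * s * z s + p * z s ^ 2) / 4)
      ((3 * w + 3 * q * d + p * (2 * w * d)) / 4) q := by
    have ha : HasDerivAt (fun s : ℂ => 3 * s * z s) (3 * w + 3 * q * d) q := by
      have := ((hasDerivAt_id q).const_mul 3).mul hdz
      refine this.congr_deriv ?_
      simp only [id_eq]
      ring
    have hb : HasDerivAt (fun s : ℂ => p * z s ^ 2) (p * (2 * w * d)) q := by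
      have := (hdz.pow 2).const_mul p
      norm_num at this
      convert this using 1
    exact (ha.add hb).div_const 4
  rw [hmain.deriv]
  linear_combination (w / 4) * key - (3 * d / 4) * (hrel q hq)
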